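/- Let S(1) = 1 ⊔ 1 with the swap involution and S(I) = I ⊔ I with the swap involution, where I is the walking isomorphism groupoid, and let f : S(I) → S(1) be the unique equivariant functor collapsing each copy of I to a point, and g : S(1) → 1 the unique map to the terminal groupoid with trivial involution. Then the set of equivariant sections of f (equivariant functors s : S(1) → S(I) with f ∘ s = id) has at least two elements. -/
import Mathlib


open CategoryTheory

instance plift_subsingleton (p : Prop) : Subsingleton (PLift p) :=
  ⟨fun a b => by cases a; cases b; rfl⟩

/-- The groupoid `S(1) = 1 ⊔ 1`: two objects and only identity morphisms. -/
structure S1 where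
  b : Bool

instance : Groupoid S1 where
  Hom a b := PLift (a.b = b.b)
  id _ := ⟨rfl⟩
  comp f g := ⟨f.down.trans g.down⟩
  id_comp _ := rfl
  comp_id _ := rfl
  assoc _ _ _ := rfl
  inv f := ⟨f.down.symm⟩
  inv_comp _ := rfl
  comp_inv _ := rfl

/-- The groupoid `S(I) = I ⊔ I`: two copies of the walking isomorphism; the field `c`
records the copy, the field `e` the endpoint. -/
structure SI where
  c : Bool
  e : Bool

instance : Groupoid SI where
  Hom a b := PLift (a.c = b.c)
  id _ := ⟨rfl⟩
  comp f g := ⟨f.down.trans g.down⟩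
  id_comp _ := rfl
  comp_id _ := rfl
  assoc _ _ _ := rfl
  inv f := ⟨f.down.symm⟩
  inv_comp _ := rfl
  comp_inv _ := rfl

instance (a b : S1) : Subsingleton (a ⟶ b) := plift_subsingleton _
instance (a b : SI) : Subsingleton (a ⟶ b) := plift_subsingleton _

/-- The swap involution on `S(1)`. -/
def swapS1 : S1 ⥤ S1 where
  obj a := ⟨Bool.not a.b⟩
  map f := ⟨by dsimp; rw [f.down]⟩
  map_id _ := rfl
  map_comp _ _ := rfl

/-- The swap involution on `S(I)`. -/
def swapSI : SI ⥤ SI where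
  obj p := ⟨Bool.not p.c, p.e⟩
  map f := ⟨by dsimp; rw [f.down]⟩
  map_id _ := rfl
  map_comp _ _ := rfl

/-- The inclusion `S(1) ↪ S(I)` picking the two domain endpoints. -/
def S1incl : S1 ⥤ SI where
  obj a := ⟨a.b, false⟩
  map f := ⟨f.down⟩
  map_id _ := rfl
  map_comp _ _ := rfl

/-- The collapse map `S(I) → S(1)` collapsing each copy of `I` to a point. -/
def collapse : SI ⥤ S1 where
  obj p := ⟨p.c⟩
  map f := ⟨f.down⟩
  map_id _ := rfl
  map_comp _ _ := rfl

/-- The other section. -/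
def sec2 : S1 ⥤ SI where
  obj a := ⟨a.b, true⟩
  map f := ⟨f.down⟩
  map_id _ := rfl
  map_comp _ _ := rfl

/-- the collapse map S(I) → S(1) has at least two equivariant sections. -/
theorem stmt16 :
    ∃ s₁ s₂ : S1 ⥤ SI,
      s₁ ≠ s₂ ∧
      (swapS1 ⋙ s₁ = s₁ ⋙ swapSI ∧ s₁ ⋙ collapse = 𝟭 S1) ∧
      (swapS1 ⋙ s₂ = s₂ ⋙ swapSI ∧ s₂ ⋙ collapse = 𝟭 S1) := by
  refine ⟨S1incl, sec2, ?_, ⟨rfl, rfl⟩, ⟨rfl, rfl⟩⟩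
  intro h
  have := congrArg (fun F => (F.obj ⟨false⟩).e) h
  simp [S1incl, sec2] at this
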